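/- For all a, b > 0 there exist c > 0 and n₀ ∈ ℕ, depending only on a and b, such that the following holds for every n ≥ n₀: if D ⊆ K is measurable, B₀, B₁, B₂ ⊆ D are pairwise disjoint measurable sets with A(B_i) ≥ a·A(K)/n for i = 0,1,2 and A(D) ≤ b·A(K)/n, and x₁, …, x_n are i.i.d. points uniformly distributed in K, then the probability that B₀ contains exactly two of the points x₁, …, x_n, each of B₁ and B₂ contains exactly one of them, and D ∖ (B₀ ∪ B₁ ∪ B₂) contains none of them is at least c. -/

import Mathlib

open MeasureTheory ProbabilityTheory

noncomputable section

/-- The Euclidean plane. -/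
abbrev E2 : Type := EuclideanSpace ℝ (Fin 2)

/-- The uniform (normalized Lebesgue) measure on a set `S`. -/
def unif (S : Set E2) : Measure E2 := (volume S)⁻¹ • volume.restrict S

def cellOf (D : Set E2) (C4 : Fin 4 → Set E2) {n : ℕ} (s : Finset (Fin n)) (i : Fin n) :
    Set E2 :=
  if h : s.card = 4 ∧ i ∈ s then C4 ((s.orderIsoOfFin h.1).symm ⟨i, h.2⟩) else Dᶜ

lemma cellOf_mem (D : Set E2) (C4 : Fin 4 → Set E2) {n : ℕ} {s : Finset (Fin n)}
    (hs : s.card = 4) {i : Fin n} (hi : i ∈ s) :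
    cellOf D C4 s i = C4 ((s.orderIsoOfFin hs).symm ⟨i, hi⟩) := dif_pos ⟨hs, hi⟩

lemma cellOf_not_mem (D : Set E2) (C4 : Fin 4 → Set E2) {n : ℕ} {s : Finset (Fin n)}
    {i : Fin n} (hi : i ∉ s) : cellOf D C4 s i = Dᶜ := dif_neg (fun h => hi h.2)

lemma cellOf_apply (D : Set E2) (C4 : Fin 4 → Set E2) {n : ℕ} {s : Finset (Fin n)}
    (hs : s.card = 4) (j : Fin 4) :
    cellOf D C4 s ((s.orderIsoOfFin hs j : Fin n)) = C4 j := by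
  rw [cellOf_mem D C4 hs (s.orderIsoOfFin hs j).2]
  rw [show (⟨(s.orderIsoOfFin hs j : Fin n), (s.orderIsoOfFin hs j).2⟩ : {x // x ∈ s})
      = s.orderIsoOfFin hs j from Subtype.ext rfl]
  rw [(s.orderIsoOfFin hs).symm_apply_apply j]

lemma prod_orderIso {n k : ℕ} (s : Finset (Fin n)) (hs : s.card = k) (f : Fin n → ENNReal) :
    ∏ i ∈ s, f i = ∏ j : Fin k, f (s.orderIsoOfFin hs j : Fin n) := by
  rw [← Finset.prod_attach s f, ← Finset.univ_eq_attach]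
  exact (Equiv.prod_comp (s.orderIsoOfFin hs).toEquiv (fun x => f ↑x)).symm

lemma real_bound (a b : ℝ) (ha : 0 < a) (hb : 0 < b) (n : ℕ) (hn8 : 8 ≤ n) (hnb : 2*b ≤ n) :
    a^4 * Real.exp (-(2*b)) / 384 ≤
      (n.choose 4 : ℝ) * ((a/n)^2 * (a/n) * (a/n) * (1 - b/n)^(n-4)) := by
  have hn0 : (0:ℝ) < n := by positivity
  have hx1 : b/n ≤ 1/2 := by rw [div_le_div_iff₀ hn0 two_pos] at *; linarith
  have hx0 : 0 < b/n := by positivity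
  -- exp bound
  have hexp1 : Real.exp (-(2*(b/n))) ≤ 1 - b/n := by
    have h1 : 1 + 2*(b/n) ≤ Real.exp (2*(b/n)) := by
      have := Real.add_one_le_exp (2*(b/n)); linarith
    have h2 : (1:ℝ) ≤ (1 - b/n) * (1 + 2*(b/n)) := by nlinarith
    have h3 : (0:ℝ) < 1 + 2*(b/n) := by positivity
    rw [Real.exp_neg]
    rw [inv_le_iff_one_le_mul₀ (Real.exp_pos _)]
    calc (1:ℝ) ≤ (1 - b/n) * (1 + 2*(b/n)) := h2
      _ ≤ (1 - b/n) * Real.exp (2*(b/n)) := by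
          apply mul_le_mul_of_nonneg_left h1; linarith
  have hpow : Real.exp (-(2*b)) ≤ (1 - b/n)^(n-4) := by
    calc Real.exp (-(2*b)) ≤ Real.exp ((n-4:ℕ) * (-(2*(b/n)))) := by
          apply Real.exp_le_exp.mpr
          have h4 : ((n-4:ℕ):ℝ) ≤ n := by exact Nat.cast_le.mpr (Nat.sub_le n 4)
          have h5 : (0:ℝ) ≤ ((n-4:ℕ):ℝ) := Nat.cast_nonneg _
          have : ((n-4:ℕ):ℝ) * (2*(b/n)) ≤ n * (2*(b/n)) := by
            apply mul_le_mul_of_nonneg_right h4; positivity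
          have hn' : (n:ℝ) * (2*(b/n)) = 2*b := by field_simp
          nlinarith
      _ = Real.exp (-(2*(b/n))) ^ (n-4) := by rw [← Real.exp_nat_mul]
      _ ≤ (1 - b/n)^(n-4) := by
          apply pow_le_pow_left₀ (Real.exp_pos _).le hexp1
  -- choose bound
  have hchoose : (n:ℝ)^4 / 384 ≤ (n.choose 4 : ℝ) := by
    have h24 : (n.choose 4 : ℝ) * 24 = (n:ℝ) * (n-1) * (n-2) * (n-3) := by
      have hnat : n.choose 4 * 24 = n.descFactorial 4 := by
        have hdvd := Nat.factorial_dvd_descFactorial n 4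
        rw [Nat.choose_eq_descFactorial_div_factorial]
        norm_num [Nat.factorial] at hdvd ⊢
        exact Nat.div_mul_cancel hdvd
      have : (n.descFactorial 4 : ℝ) = (n:ℝ)*(n-1)*(n-2)*(n-3) := by
        simp [Nat.descFactorial]
        push_cast [Nat.cast_sub (by omega : 1 ≤ n), Nat.cast_sub (by omega : 2 ≤ n),
          Nat.cast_sub (by omega : 3 ≤ n)]
        ring
      rw [← this, ← hnat]; push_cast; ring
    have hhalf : (n:ℝ)/2 ≤ (n:ℝ) - 3 := by
      have : (8:ℝ) ≤ n := by exact_mod_cast hn8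
      linarith
    nlinarith [pow_pos hn0 4, sq_nonneg ((n:ℝ)/2)]
  have key : (a/n)^2 * (a/n) * (a/n) = a^4/(n:ℝ)^4 := by field_simp
  rw [key]
  calc a^4 * Real.exp (-(2*b)) / 384
      = ((n:ℝ)^4/384) * (a^4/(n:ℝ)^4 * Real.exp (-(2*b))) := by
        field_simp
    _ ≤ (n.choose 4 : ℝ) * (a^4/(n:ℝ)^4 * Real.exp (-(2*b))) := by
        apply mul_le_mul_of_nonneg_right hchoose; positivity
    _ ≤ (n.choose 4 : ℝ) * (a^4/(n:ℝ)^4 * (1 - b/n)^(n-4)) := by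
        apply mul_le_mul_of_nonneg_left _ (Nat.cast_nonneg _)
        apply mul_le_mul_of_nonneg_left hpow; positivity


theorem prob_two_points_in_first_cell
    (K : Set E2) (hK : IsCompact K) (hKconv : Convex ℝ K)
    (hKint : (interior K).Nonempty)
    (a b : ℝ) (ha : 0 < a) (hb : 0 < b) :
    ∃ c > (0:ℝ), ∃ n₀ : ℕ, ∀ n : ℕ, n₀ ≤ n →
      ∀ D : Set E2, D ⊆ K → MeasurableSet D →
      ∀ B : Fin 3 → Set E2, (∀ k, B k ⊆ D) → (∀ k, MeasurableSet (B k)) →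
        (Pairwise fun k l => Disjoint (B k) (B l)) →
        (∀ k, a * (volume K).toReal / n ≤ (volume (B k)).toReal) →
        (volume D).toReal ≤ b * (volume K).toReal / n →
      ∀ (Ω : Type) (_ : MeasureSpace Ω), IsProbabilityMeasure (ℙ : Measure Ω) →
      ∀ X : Fin n → Ω → E2, (∀ i, Measurable (X i)) →
        iIndepFun X ℙ →
        (∀ i, Measure.map (X i) ℙ = unif K) →
        ENNReal.ofReal c ≤
          ℙ {ω | ({i : Fin n | X i ω ∈ B 0}).ncard = 2 ∧
                 ({i : Fin n | X i ω ∈ B 1}).ncard = 1 ∧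
                 ({i : Fin n | X i ω ∈ B 2}).ncard = 1 ∧
                 ∀ i : Fin n, X i ω ∉ D \ (B 0 ∪ B 1 ∪ B 2)} := by
  refine ⟨a^4 * Real.exp (-(2*b)) / 384, by positivity, max 8 ⌈2*b⌉₊, ?_⟩
  intro n hn D hDK hDmeas B hBD hBmeas hBdisj hBlow hDub Ω mΩ hprob X hXmeas hXindep hXdist
  have hn8 : 8 ≤ n := le_trans (le_max_left _ _) hn
  have hnb : 2*b ≤ (n:ℝ) := by
    have := le_trans (le_max_right 8 ⌈2*b⌉₊) hn
    exact_mod_cast le_trans (Nat.le_ceil (2*b)) (by exact_mod_cast this)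
  have hn0 : (0:ℝ) < n := by positivity
  -- basic facts about K
  have hKm : MeasurableSet K := hK.measurableSet
  have hvolK_ne_top : volume K ≠ ⊤ := hK.measure_lt_top.ne
  have hvolK_pos : 0 < volume K :=
    lt_of_lt_of_le (isOpen_interior.measure_pos volume hKint) (measure_mono interior_subset)
  have hVK : 0 < (volume K).toReal := ENNReal.toReal_pos hvolK_pos.ne' hvolK_ne_top
  set VK := (volume K).toReal with hVKdef
  -- the four cells
  set C4 : Fin 4 → Set E2 := ![B 0, B 0, B 1, B 2] with hC4def
  have hC4m : ∀ j, MeasurableSet (C4 j) := by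
    intro j; fin_cases j <;> simp [hC4def] <;> exact hBmeas _
  have hC4D : ∀ j, C4 j ⊆ D := by
    intro j; fin_cases j <;> simp [hC4def] <;> exact hBD _
  have hC4U : ∀ j, C4 j ⊆ B 0 ∪ B 1 ∪ B 2 := by
    intro j x hx; fin_cases j <;> simp [hC4def] at hx ⊢ <;> tauto
  have hgm : ∀ (s : Finset (Fin n)) (i : Fin n), MeasurableSet (cellOf D C4 s i) := by
    intro s i
    unfold cellOf
    split
    · exact hC4m _
    · exact hDmeas.compl
  -- the events
  set Ev : Finset (Fin n) → Set Ω := fun s => ⋂ i, X i ⁻¹' cellOf D C4 s i with hEvdef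
  have hEvm : ∀ s, MeasurableSet (Ev s) :=
    fun s => MeasurableSet.iInter fun i => hXmeas i (hgm s i)
  set T : Finset (Finset (Fin n)) := Finset.powersetCard 4 Finset.univ with hTdef
  have hTcard : ∀ s ∈ T, s.card = 4 := fun s hs => (Finset.mem_powersetCard_univ.mp hs)
  -- facts about membership in events
  have hEv_in : ∀ (s : Finset (Fin n)) (hs : s.card = 4) (ω : Ω), ω ∈ Ev s →
      ∀ (i : Fin n) (hi : i ∈ s), X i ω ∈ C4 ((s.orderIsoOfFin hs).symm ⟨i, hi⟩) := by
    intro s hs ω hω i hi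
    have := Set.mem_iInter.mp hω i
    rwa [Set.mem_preimage, cellOf_mem D C4 hs hi] at this
  have hEv_out : ∀ (s : Finset (Fin n)) (ω : Ω), ω ∈ Ev s →
      ∀ (i : Fin n), i ∉ s → X i ω ∉ D := by
    intro s ω hω i hi
    have := Set.mem_iInter.mp hω i
    rwa [Set.mem_preimage, cellOf_not_mem D C4 hi] at this
  -- inclusion into the target event
  have hsub : (⋃ s ∈ T, Ev s) ⊆ {ω | ({i : Fin n | X i ω ∈ B 0}).ncard = 2 ∧
                 ({i : Fin n | X i ω ∈ B 1}).ncard = 1 ∧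
                 ({i : Fin n | X i ω ∈ B 2}).ncard = 1 ∧
                 ∀ i : Fin n, X i ω ∉ D \ (B 0 ∪ B 1 ∪ B 2)} := by
    intro ω hω
    simp only [Set.mem_iUnion] at hω
    obtain ⟨s, hsT, hω⟩ := hω
    have hs : s.card = 4 := hTcard s hsT
    set e := s.orderIsoOfFin hs with hedef
    have hBval : ∀ j : Fin 4, X (e j : Fin n) ω ∈ C4 j := by
      intro j
      have h := hEv_in s hs ω hω (e j : Fin n) (e j).2
      rwa [show (⟨(e j : Fin n), (e j).2⟩ : {x // x ∈ s}) = e j from Subtype.ext rfl,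
        e.symm_apply_apply] at h
    have hinj : ∀ j j' : Fin 4, j ≠ j' → (e j : Fin n) ≠ (e j' : Fin n) := by
      intro j j' hjj hv
      exact hjj (e.injective (Subtype.ext hv))
    have hclass : ∀ i : Fin n, i ∈ s → ∃ j : Fin 4, i = (e j : Fin n) ∧ X i ω ∈ C4 j := by
      intro i hi
      refine ⟨e.symm ⟨i, hi⟩, ?_, hEv_in s hs ω hω i hi⟩
      rw [e.apply_symm_apply]
    have hd01 : Disjoint (B 0) (B 1) := hBdisj (by decide)
    have hd02 : Disjoint (B 0) (B 2) := hBdisj (by decide)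
    have hd12 : Disjoint (B 1) (B 2) := hBdisj (by decide)
    have hset0 : {i : Fin n | X i ω ∈ B 0} = {(e 0 : Fin n), (e 1 : Fin n)} := by
      ext i
      simp only [Set.mem_setOf_eq, Set.mem_insert_iff, Set.mem_singleton_iff]
      constructor
      · intro hXi
        by_cases hi : i ∈ s
        · obtain ⟨j, rfl, hXj⟩ := hclass i hi
          fin_cases j
          · exact Or.inl rfl
          · exact Or.inr rfl
          · simp only [hC4def] at hXj
            exact absurd hXi (Set.disjoint_right.mp hd01 (by simpa using hXj))
          · simp only [hC4def] at hXj
            exact absurd hXi (Set.disjoint_right.mp hd02 (by simpa using hXj))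
        · exact absurd (hBD 0 hXi) (hEv_out s ω hω i hi)
      · rintro (rfl | rfl)
        · simpa [hC4def] using hBval 0
        · simpa [hC4def] using hBval 1
    have hset1 : {i : Fin n | X i ω ∈ B 1} = {(e 2 : Fin n)} := by
      ext i
      simp only [Set.mem_setOf_eq, Set.mem_singleton_iff]
      constructor
      · intro hXi
        by_cases hi : i ∈ s
        · obtain ⟨j, rfl, hXj⟩ := hclass i hi
          fin_cases j
          · simp only [hC4def] at hXj
            exact absurd hXi (Set.disjoint_left.mp hd01 (by simpa using hXj))
          · simp only [hC4def] at hXj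
            exact absurd hXi (Set.disjoint_left.mp hd01 (by simpa using hXj))
          · rfl
          · simp only [hC4def] at hXj
            exact absurd hXi (Set.disjoint_right.mp hd12 (by simpa using hXj))
        · exact absurd (hBD 1 hXi) (hEv_out s ω hω i hi)
      · rintro rfl
        simpa [hC4def] using hBval 2
    have hset2 : {i : Fin n | X i ω ∈ B 2} = {(e 3 : Fin n)} := by
      ext i
      simp only [Set.mem_setOf_eq, Set.mem_singleton_iff]
      constructor
      · intro hXi
        by_cases hi : i ∈ s
        · obtain ⟨j, rfl, hXj⟩ := hclass i hi
          fin_cases j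
          · simp only [hC4def] at hXj
            exact absurd hXi (Set.disjoint_left.mp hd02 (by simpa using hXj))
          · simp only [hC4def] at hXj
            exact absurd hXi (Set.disjoint_left.mp hd02 (by simpa using hXj))
          · simp only [hC4def] at hXj
            exact absurd hXi (Set.disjoint_left.mp hd12 (by simpa using hXj))
          · rfl
        · exact absurd (hBD 2 hXi) (hEv_out s ω hω i hi)
      · rintro rfl
        simpa [hC4def] using hBval 3
    refine ⟨?_, ?_, ?_, ?_⟩
    · rw [hset0]
      exact Set.ncard_pair (hinj 0 1 (by decide))
    · rw [hset1, Set.ncard_singleton]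
    · rw [hset2, Set.ncard_singleton]
    · intro i hiD
      obtain ⟨hiD1, hiD2⟩ := hiD
      by_cases hi : i ∈ s
      · obtain ⟨j, rfl, hXj⟩ := hclass i hi
        exact hiD2 (hC4U j hXj)
      · exact hEv_out s ω hω i hi hiD1
  -- pairwise disjointness
  have hdisj : (↑T : Set (Finset (Fin n))).PairwiseDisjoint Ev := by
    intro s hsT t htT hst
    rw [Function.onFun, Set.disjoint_left]
    intro ω hωs hωt
    have hs : s.card = 4 := hTcard s (Finset.mem_coe.mp hsT)
    have ht : t.card = 4 := hTcard t (Finset.mem_coe.mp htT)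
    have hns : ¬ s ⊆ t := fun hsub =>
      hst (Finset.eq_of_subset_of_card_le hsub (by rw [hs, ht]))
    obtain ⟨i, his, hit⟩ := Finset.not_subset.mp hns
    exact hEv_out t ω hωt i hit (hC4D _ (hEv_in s hs ω hωs i his))
  -- value of unif on the relevant sets
  have hBval' : ∀ k : Fin 3, unif K (B k) = (volume K)⁻¹ * volume (B k) := by
    intro k
    rw [unif, Measure.smul_apply, Measure.restrict_apply (hBmeas k), smul_eq_mul,
      Set.inter_eq_left.mpr (fun x hx => hDK (hBD k hx))]
  have hqval : unif K Dᶜ = (volume K)⁻¹ * (volume K - volume D) := by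
    rw [unif, Measure.smul_apply, Measure.restrict_apply hDmeas.compl, smul_eq_mul]
    congr 1
    rw [Set.inter_comm, ← Set.diff_eq]
    exact measure_diff hDK hDmeas.nullMeasurableSet
      (lt_of_le_of_lt (measure_mono hDK) hK.measure_lt_top).ne
  -- probability of each elementary event
  have hPs : ∀ s ∈ T, ℙ (Ev s) =
      (unif K (B 0))^2 * unif K (B 1) * unif K (B 2) * (unif K Dᶜ)^(n-4) := by
    intro s hsT
    have hs := hTcard s hsT
    have h1 : Ev s = ⋂ i ∈ Finset.univ, X i ⁻¹' cellOf D C4 s i := by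
      simp [hEvdef]
    rw [h1, hXindep.measure_inter_preimage_eq_mul Finset.univ (fun i _ => hgm s i)]
    have h2 : ∀ i : Fin n, ℙ (X i ⁻¹' cellOf D C4 s i) = unif K (cellOf D C4 s i) := by
      intro i
      rw [← hXdist i, Measure.map_apply (hXmeas i) (hgm s i)]
    calc ∏ i, ℙ (X i ⁻¹' cellOf D C4 s i)
        = ∏ i, unif K (cellOf D C4 s i) := Finset.prod_congr rfl (fun i _ => h2 i)
      _ = (∏ i ∈ s, unif K (cellOf D C4 s i)) * ∏ i ∈ sᶜ, unif K (cellOf D C4 s i) :=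
          (Finset.prod_mul_prod_compl s _).symm
      _ = (∏ j : Fin 4, unif K (C4 j)) * (unif K Dᶜ)^(n-4) := by
          congr 1
          · rw [prod_orderIso s hs]
            exact Finset.prod_congr rfl (fun j _ => by rw [cellOf_apply D C4 hs j])
          · rw [Finset.prod_congr rfl (fun i hi => by
              rw [cellOf_not_mem D C4 (Finset.mem_compl.mp hi)]), Finset.prod_const,
              Finset.card_compl, hs, Fintype.card_fin]
      _ = (unif K (B 0))^2 * unif K (B 1) * unif K (B 2) * (unif K Dᶜ)^(n-4) := by
          rw [Fin.prod_univ_four]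
          simp only [hC4def, Matrix.cons_val_zero, Matrix.cons_val_one, Matrix.head_cons,
            Matrix.cons_val_two, Matrix.tail_cons, Matrix.cons_val_three]
          ring
  -- total probability of the union
  have hsum : ℙ (⋃ s ∈ T, Ev s) = (n.choose 4 : ENNReal) *
      ((unif K (B 0))^2 * unif K (B 1) * unif K (B 2) * (unif K Dᶜ)^(n-4)) := by
    rw [measure_biUnion_finset hdisj (fun s _ => hEvm s), Finset.sum_congr rfl hPs,
      Finset.sum_const, hTdef, Finset.card_powersetCard, Finset.card_univ, Fintype.card_fin,
      nsmul_eq_mul]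
  -- lower bounds on the cell probabilities
  have hu_low : ∀ k : Fin 3, ENNReal.ofReal (a/n) ≤ unif K (B k) := by
    intro k
    have hBne : volume (B k) ≠ ⊤ :=
      (lt_of_le_of_lt (measure_mono (fun x hx => hDK (hBD k hx))) hK.measure_lt_top).ne
    have hne : unif K (B k) ≠ ⊤ := by
      rw [hBval' k]
      exact ENNReal.mul_ne_top (ENNReal.inv_ne_top.mpr hvolK_pos.ne') hBne
    have htr : a/n ≤ (unif K (B k)).toReal := by
      rw [hBval' k, ENNReal.toReal_mul, ENNReal.toReal_inv]
      calc a/(n:ℝ) = VK⁻¹ * (a * VK / n) := by field_simp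
        _ ≤ VK⁻¹ * (volume (B k)).toReal :=
            mul_le_mul_of_nonneg_left (hBlow k) (by positivity)
    calc ENNReal.ofReal (a/n) ≤ ENNReal.ofReal (unif K (B k)).toReal :=
          ENNReal.ofReal_le_ofReal htr
      _ = unif K (B k) := ENNReal.ofReal_toReal hne
  have h1bn : (0:ℝ) ≤ 1 - b/n := by
    have : b/(n:ℝ) ≤ 1/2 := by
      rw [div_le_iff₀ hn0]; linarith
    linarith
  have hq_low : ENNReal.ofReal (1 - b/n) ≤ unif K Dᶜ := by
    have hne : unif K Dᶜ ≠ ⊤ := by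
      rw [hqval]
      exact ENNReal.mul_ne_top (ENNReal.inv_ne_top.mpr hvolK_pos.ne')
        (ENNReal.sub_ne_top hvolK_ne_top)
    have htr : 1 - b/n ≤ (unif K Dᶜ).toReal := by
      rw [hqval, ENNReal.toReal_mul, ENNReal.toReal_inv,
        ENNReal.toReal_sub_of_le (measure_mono hDK) hvolK_ne_top]
      have hstep : VK - b * VK / n ≤ VK - (volume D).toReal := by linarith [hDub]
      calc 1 - b/(n:ℝ) = VK⁻¹ * (VK - b * VK / n) := by field_simp
        _ ≤ VK⁻¹ * (VK - (volume D).toReal) :=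
            mul_le_mul_of_nonneg_left hstep (by positivity)
    calc ENNReal.ofReal (1 - b/n) ≤ ENNReal.ofReal (unif K Dᶜ).toReal :=
          ENNReal.ofReal_le_ofReal htr
      _ = unif K Dᶜ := ENNReal.ofReal_toReal hne
  -- final chain
  calc ENNReal.ofReal (a^4 * Real.exp (-(2*b)) / 384)
      ≤ ENNReal.ofReal ((n.choose 4 : ℝ) * ((a/n)^2 * (a/n) * (a/n) * (1 - b/n)^(n-4))) :=
        ENNReal.ofReal_le_ofReal (real_bound a b ha hb n hn8 hnb)
    _ = (n.choose 4 : ENNReal) * (ENNReal.ofReal (a/n)^2 * ENNReal.ofReal (a/n) *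
          ENNReal.ofReal (a/n) * ENNReal.ofReal (1 - b/n)^(n-4)) := by
        rw [ENNReal.ofReal_mul (Nat.cast_nonneg _), ENNReal.ofReal_natCast,
          ENNReal.ofReal_mul (by positivity), ENNReal.ofReal_mul (by positivity),
          ENNReal.ofReal_mul (by positivity), ENNReal.ofReal_pow (by positivity),
          ENNReal.ofReal_pow h1bn]
    _ ≤ (n.choose 4 : ENNReal) * ((unif K (B 0))^2 * unif K (B 1) * unif K (B 2) *
          (unif K Dᶜ)^(n-4)) := by
        gcongr <;>
          first
          | exact hu_low 0
          | exact hu_low 1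
          | exact hu_low 2
          | exact hq_low
    _ = ℙ (⋃ s ∈ T, Ev s) := hsum.symm
    _ ≤ ℙ {ω | ({i : Fin n | X i ω ∈ B 0}).ncard = 2 ∧
                 ({i : Fin n | X i ω ∈ B 1}).ncard = 1 ∧
                 ({i : Fin n | X i ω ∈ B 2}).ncard = 1 ∧
                 ∀ i : Fin n, X i ω ∉ D \ (B 0 ∪ B 1 ∪ B 2)} := measure_mono hsub
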